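/- Let 𝔠 > 0, z > 0, T := 𝔠²/z, and define a₁ := K₃(z)/K₂(z), a₂ := −a₁² + 6a₁/z + 1, a₃ := −a₁³ + 6a₁²/z − 6a₁/z² + a₁ − 1/z, where K_α(z) := ∫₀^∞ e^{−z cosh t} cosh(αt) dt. Assume a₁ > 0, a₃ > 0, a₂ − a₁/z > 0 and a₃ + a₂/z − a₁/z² > 0. Let u₁ ∈ ℝ, u₀ := √(𝔠²+u₁²), M := √((1/z)(a₂ − a₁/z)(a₃ + a₂/z − a₁/z²)), A₂ := a₃u₀²/𝔠² + a₂/z − a₁/z², and λ₁ := (a₃u₀u₁ − 𝔠²M)/(𝔠A₂). Then λ₁ = 0 if and only if u₁ = √( T · (za₂ − a₁)/(za₃) ). -/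

import Mathlib

open MeasureTheory

/-- The modified Bessel function K_α(z) = ∫₀^∞ e^{−z cosh t} cosh(αt) dt. -/
noncomputable def Kb (α z : ℝ) : ℝ :=
  ∫ t in Set.Ioi (0 : ℝ), Real.exp (-z * Real.cosh t) * Real.cosh (α * t)

/-- λ₁ = 0 if and only if u₁ = √(T(za₂ − a₁)/(za₃)). -/
theorem lambda_one_eq_zero_iff (c z T a₁ a₂ a₃ u₁ u₀ M A₂ lam₁ : ℝ)
    (hc : 0 < c) (hz : 0 < z) (hT : T = c ^ 2 / z)
    (ha₁ : a₁ = Kb 3 z / Kb 2 z)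
    (ha₂ : a₂ = -a₁ ^ 2 + 6 * a₁ / z + 1)
    (ha₃ : a₃ = -a₁ ^ 3 + 6 * a₁ ^ 2 / z - 6 * a₁ / z ^ 2 + a₁ - 1 / z)
    (hpos1 : 0 < a₁) (hpos3 : 0 < a₃)
    (hpos2 : 0 < a₂ - a₁ / z) (hpos4 : 0 < a₃ + a₂ / z - a₁ / z ^ 2)
    (hu₀ : u₀ = Real.sqrt (c ^ 2 + u₁ ^ 2))
    (hM : M = Real.sqrt ((1 / z) * (a₂ - a₁ / z) * (a₃ + a₂ / z - a₁ / z ^ 2)))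
    (hA₂ : A₂ = a₃ * u₀ ^ 2 / c ^ 2 + a₂ / z - a₁ / z ^ 2)
    (hlam : lam₁ = (a₃ * u₀ * u₁ - c ^ 2 * M) / (c * A₂)) :
    lam₁ = 0 ↔ u₁ = Real.sqrt (T * (z * a₂ - a₁) / (z * a₃)) := by
  have hzne : z ≠ 0 := hz.ne'
  have hcne : c ≠ 0 := hc.ne'
  set P : ℝ := a₂ - a₁ / z with hP
  set Q : ℝ := a₃ + a₂ / z - a₁ / z ^ 2 with hQ
  have hQP : Q = a₃ + P / z := by rw [hQ, hP]; field_simp; ring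
  have hu0sq : u₀ ^ 2 = c ^ 2 + u₁ ^ 2 := by
    rw [hu₀, Real.sq_sqrt]; positivity
  have hu0pos : 0 < u₀ := by
    rw [hu₀]; exact Real.sqrt_pos.mpr (by positivity)
  have hMpos : 0 < M := by
    rw [hM]; exact Real.sqrt_pos.mpr (by positivity)
  have hMsq : M ^ 2 = (1 / z) * P * Q := by
    rw [hM, Real.sq_sqrt]; positivity
  have hPz : 0 < a₂ / z - a₁ / z ^ 2 := by
    have : a₂ / z - a₁ / z ^ 2 = P / z := by rw [hP]; field_simp
    rw [this]; positivity
  have hA₂pos : 0 < A₂ := by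
    rw [hA₂]
    have h1 : 0 < a₃ * u₀ ^ 2 / c ^ 2 := by positivity
    linarith
  have hden : c * A₂ ≠ 0 := by positivity
  have harg : T * (z * a₂ - a₁) / (z * a₃) = c ^ 2 * P / (z * a₃) := by
    rw [hT, hP]; field_simp
  have hargpos : 0 < c ^ 2 * P / (z * a₃) := by positivity
  have hlamiff : lam₁ = 0 ↔ a₃ * u₀ * u₁ = c ^ 2 * M := by
    rw [hlam, div_eq_zero_iff, sub_eq_zero]
    exact or_iff_left hden
  rw [hlamiff]
  constructor
  · intro hnum
    have hu1pos : 0 < u₁ := by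
      nlinarith [mul_pos hpos3 hu0pos, mul_pos (pow_pos hc 2) hMpos]
    have hsq : a₃ ^ 2 * (c ^ 2 + u₁ ^ 2) * u₁ ^ 2 = c ^ 4 * ((1 / z) * P * (a₃ + P / z)) := by
      calc a₃ ^ 2 * (c ^ 2 + u₁ ^ 2) * u₁ ^ 2 = (a₃ * u₀ * u₁) ^ 2 := by
            rw [← hu0sq]; ring
        _ = (c ^ 2 * M) ^ 2 := by rw [hnum]
        _ = _ := by rw [mul_pow, hMsq, hQP]; ring
    have hfac : (a₃ * u₁ ^ 2 - c ^ 2 * P / z) * (a₃ * u₁ ^ 2 + a₃ * c ^ 2 + c ^ 2 * P / z) = 0 := by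
      field_simp at hsq ⊢
      linear_combination hsq
    have hx : u₁ ^ 2 = c ^ 2 * P / (z * a₃) := by
      have hpos' : 0 < a₃ * u₁ ^ 2 + a₃ * c ^ 2 + c ^ 2 * P / z := by positivity
      have h0 : a₃ * u₁ ^ 2 - c ^ 2 * P / z = 0 := by
        rcases mul_eq_zero.mp hfac with h | h
        · exact h
        · exact absurd h hpos'.ne'
      field_simp at h0 ⊢
      linarith
    rw [show T * (z * a₂ - a₁) / (z * a₃) = u₁ ^ 2 by rw [harg, ← hx]]
    exact (Real.sqrt_sq hu1pos.le).symm
  · intro h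
    have hu1sq : u₁ ^ 2 = c ^ 2 * P / (z * a₃) := by
      rw [h, Real.sq_sqrt (by rw [harg]; exact hargpos.le), harg]
    have hu1pos : 0 < u₁ := by
      rw [h]
      exact Real.sqrt_pos.mpr (by rw [harg]; exact hargpos)
    have hsq : (a₃ * u₀ * u₁) ^ 2 = (c ^ 2 * M) ^ 2 := by
      have e1 : (a₃ * u₀ * u₁) ^ 2 = a₃ ^ 2 * (c ^ 2 + u₁ ^ 2) * u₁ ^ 2 := by
        rw [← hu0sq]; ring
      have e2 : (c ^ 2 * M) ^ 2 = c ^ 4 * (1 / z * P * (a₃ + P / z)) := by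
        rw [mul_pow, hMsq, hQP]; ring
      rw [e1, e2, hu1sq]
      field_simp
    have h1 : 0 ≤ a₃ * u₀ * u₁ := by positivity
    have h2 : 0 ≤ c ^ 2 * M := by positivity
    calc a₃ * u₀ * u₁ = Real.sqrt ((a₃ * u₀ * u₁) ^ 2) := (Real.sqrt_sq h1).symm
      _ = Real.sqrt ((c ^ 2 * M) ^ 2) := by rw [hsq]
      _ = c ^ 2 * M := Real.sqrt_sq h2
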